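/- Let s_1,…,s_N ∈ F_2^{2n} with s_j = (α_{j1},β_{j1},…,α_{jn},β_{jn}), let φ ∈ R, and let A be the N×n matrix over F_2 with entries α_{jk}. Then ⟨0| Π_{j=1}^N exp(iφ σ(s_j)) |0⟩ = Σ_{x ∈ F_2^N, A^T x = 0} (cos φ)^{N−|x|} (i sin φ)^{|x|} ⟨0| Π_{j : x_j=1} σ(s_j) |0⟩, where the products are taken in order of increasing j and |x| is the Hamming weight of x. -/

import Mathlib

open NormedSpace

/-- Entry `(r, c)` of the Pauli matrix `σ_{αβ}`, with indices in `ZMod 2`. -/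
noncomputable def pauliEntry (α β r c : ZMod 2) : ℂ :=
  if α = 0 then
    (if r = c then (if β = 1 ∧ r = 1 then -1 else 1) else 0)
  else
    (if r = c then 0 else
      if β = 0 then 1 else (if c = 0 then -Complex.I else Complex.I))

theorem exp_invol' {A : Type*} [NormedRing A] [NormedAlgebra ℂ A] [CompleteSpace A]
    (a : A) (ha : a * a = 1) (φ : ℝ) :
    exp ((Complex.I * (φ : ℂ)) • a) =
      (Real.cos φ : ℂ) • (1 : A) + (Complex.I * (Real.sin φ : ℂ)) • a := by
  have ha2 : ∀ k : ℕ, a ^ (2 * k) = 1 := fun k => by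
    rw [pow_mul, sq, ha, one_pow]
  rw [exp_eq_tsum ℂ]
  refine HasSum.tsum_eq ?_
  refine HasSum.even_add_odd ?_ ?_
  · have hc := (Complex.hasSum_cos' (φ : ℂ)).smul_const (1 : A)
    rw [← Complex.ofReal_cos] at hc
    convert hc using 2 with k
    rw [smul_pow, ha2, smul_smul]
    congr 1
    ring
  · have hs := ((Complex.hasSum_sin' (φ : ℂ)).mul_right Complex.I).smul_const a
    rw [← Complex.ofReal_sin] at hs
    convert hs using 2 with k
    · rw [smul_pow, pow_succ (a := a), ha2, one_mul, smul_smul]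
      congr 1
      rw [div_mul_cancel₀ _ Complex.I_ne_zero]
      ring
    · rw [mul_comm]

lemma zmod2_cases (z : ZMod 2) : z = 0 ∨ z = 1 := by revert z; decide

lemma zmod2_sum (f : ZMod 2 → ℂ) : ∑ c, f c = f 0 + f 1 := by
  rw [show (Finset.univ : Finset (ZMod 2)) = {0, 1} by decide]
  rw [Finset.sum_pair (by decide)]

lemma pauli_mul (a b r s : ZMod 2) :
    ∑ c, pauliEntry a b r c * pauliEntry a b c s = if r = s then 1 else 0 := by
  rw [zmod2_sum]
  rcases zmod2_cases a with rfl | rfl <;> rcases zmod2_cases b with rfl | rfl <;>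
    rcases zmod2_cases r with rfl | rfl <;> rcases zmod2_cases s with rfl | rfl <;>
    simp_all [pauliEntry, Complex.I_mul_I, show (1+1 : ZMod 2) = 0 from rfl]

lemma pauli_zero (a b r c : ZMod 2) (h : c ≠ r + a) : pauliEntry a b r c = 0 := by
  rcases zmod2_cases a with rfl | rfl <;> rcases zmod2_cases r with rfl | rfl <;>
    rcases zmod2_cases c with rfl | rfl <;>
    simp_all [pauliEntry, show (1+1 : ZMod 2) = 0 by decide]

section
variable {n N : ℕ} {α β : Fin N → Fin n → ZMod 2}
  {σ : Fin N → Matrix (Fin n → ZMod 2) (Fin n → ZMod 2) ℂ}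
  (hσ : ∀ j x y, (σ j) x y = ∏ k, pauliEntry (α j k) (β j k) (x k) (y k))
include hσ

lemma sigma_sq (j : Fin N) : σ j * σ j = 1 := by
  ext x y
  rw [Matrix.mul_apply]
  simp_rw [hσ, ← Finset.prod_mul_distrib]
  have h2 := Finset.prod_univ_sum (fun _ : Fin n => (Finset.univ : Finset (ZMod 2)))
    (fun k c => pauliEntry (α j k) (β j k) (x k) c * pauliEntry (α j k) (β j k) c (y k))
  rw [Fintype.piFinset_univ] at h2
  rw [← h2]
  simp [pauli_mul, Finset.prod_boole, Matrix.one_apply, funext_iff]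

lemma sigma_zero (j : Fin N) (x y : Fin n → ZMod 2) (h : y ≠ fun k => x k + α j k) :
    σ j x y = 0 := by
  rw [hσ]
  obtain ⟨k, hk⟩ : ∃ k, y k ≠ x k + α j k := by
    by_contra hc
    push_neg at hc
    exact h (funext hc)
  exact Finset.prod_eq_zero (Finset.mem_univ k) (pauli_zero _ _ _ _ hk)

lemma prod_zero' : ∀ (l : List (Fin N)) (x y : Fin n → ZMod 2),
    y ≠ (fun k => x k + (l.map fun j => α j k).sum) → ((l.map σ).prod) x y = 0 := by
  intro l
  induction l with
  | nil =>
    intro x y h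
    simp only [List.map_nil, List.prod_nil]
    rw [Matrix.one_apply_ne']
    simpa using h
  | cons j l ih =>
    intro x y h
    rw [List.map_cons, List.prod_cons, Matrix.mul_apply]
    refine Finset.sum_eq_zero fun z _ => ?_
    by_cases hz : z = fun k => x k + α j k
    · rw [ih z y ?_, mul_zero]
      subst hz
      simpa [add_assoc] using h
    · rw [sigma_zero hσ j x z hz, zero_mul]
end

lemma expand_list {A : Type*} [Ring A] [Algebra ℂ A] {ι : Type*} (M : ι → A) (c d : ℂ) :
    ∀ l : List ι, ((l.map fun j => c • (1 : A) + d • M j).prod) =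
      (l.sublists'.map fun t =>
        (c ^ (l.length - t.length) * d ^ t.length) • (t.map M).prod).sum := by
  intro l
  induction l with
  | nil => simp
  | cons j l ih =>
    rw [List.map_cons, List.prod_cons, ih, add_mul, smul_mul_assoc, one_mul, smul_mul_assoc,
      List.sublists'_cons, List.map_append, List.sum_append, List.map_map]
    congr 1
    · rw [List.smul_sum, List.map_map]
      congr 1
      refine List.map_congr_left fun t ht => ?_
      have hle : t.length ≤ l.length := (List.mem_sublists'.mp ht).length_le
      simp only [Function.comp_apply, smul_smul]
      congr 1
      rw [List.length_cons, Nat.succ_sub hle, pow_succ]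
      ring
    · rw [← List.sum_map_mul_left, List.smul_sum, List.map_map]
      congr 1
      refine List.map_congr_left fun t ht => ?_
      simp only [Function.comp_apply, List.map_cons, List.prod_cons, List.length_cons,
        mul_smul_comm, smul_smul, Nat.succ_sub_succ]
      congr 1
      ring

lemma filter_recover {ι : Type*} [DecidableEq ι] :
    ∀ {t l : List ι}, t.Sublist l → l.Nodup → l.filter (fun j => j ∈ t) = t := by
  intro t l h
  induction h with
  | slnil => simp
  | @cons l₁ l₂ a h ih =>
    intro hnd
    have hal : a ∉ l₂ := (List.nodup_cons.mp hnd).1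
    have hat : a ∉ l₁ := fun hmem => hal (h.subset hmem)
    rw [List.filter_cons_of_neg (by simpa using hat)]
    exact ih (List.nodup_cons.mp hnd).2
  | @cons_cons l₁ l₂ a h ih =>
    intro hnd
    have hal : a ∉ l₂ := (List.nodup_cons.mp hnd).1
    rw [List.filter_cons_of_pos (by simp)]
    congr 1
    rw [List.filter_congr (fun b hb => ?_)]
    · exact ih (List.nodup_cons.mp hnd).2
    · have hba : b ≠ a := fun hba => hal (hba ▸ hb)
      simp [hba]

lemma filter_card {N : ℕ} (p : Fin N → Prop) [DecidablePred p] :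
    (Finset.univ.filter p).card = ((List.finRange N).filter (fun j => decide (p j))).length := by
  rw [← List.toFinset_card_of_nodup ((List.nodup_finRange N).filter _)]
  congr 1
  ext j
  simp [List.mem_filter]

lemma filter_map_sum {N : ℕ} {M : Type*} [AddCommMonoid M] (x : Fin N → ZMod 2)
    (f : Fin N → M) :
    (((List.finRange N).filter fun j => x j = 1).map f).sum
      = ∑ j, (if x j = 1 then f j else 0) := by
  rw [Fin.sum_univ_def]
  generalize List.finRange N = l
  induction l with
  | nil => simp
  | cons a l ih =>
    by_cases h : x a = 1 <;>
      simp [List.filter_cons, h, ih]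

theorem stmt_16 (n N : ℕ) (α β : Fin N → Fin n → ZMod 2) (φ : ℝ)
    (σ : Fin N → Matrix (Fin n → ZMod 2) (Fin n → ZMod 2) ℂ)
    (hσ : ∀ j x y, (σ j) x y = ∏ k, pauliEntry (α j k) (β j k) (x k) (y k)) :
    (((List.finRange N).map fun j =>
        NormedSpace.exp ((Complex.I * (φ : ℂ)) • σ j)).prod) 0 0 =
      ∑ x ∈ Finset.univ.filter (fun x : Fin N → ZMod 2 => ∀ k, ∑ j, α j k * x j = 0),
        (Real.cos φ : ℂ) ^ (N - (Finset.univ.filter (fun j => x j = 1)).card) *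
          (Complex.I * (Real.sin φ : ℂ)) ^ (Finset.univ.filter (fun j => x j = 1)).card *
          ((((List.finRange N).filter fun j => x j = 1).map σ).prod 0 0) := by
  letI : SeminormedRing (Matrix (Fin n → ZMod 2) (Fin n → ZMod 2) ℂ) :=
    Matrix.linftyOpSemiNormedRing
  letI : NormedRing (Matrix (Fin n → ZMod 2) (Fin n → ZMod 2) ℂ) :=
    Matrix.linftyOpNormedRing
  letI : NormedAlgebra ℂ (Matrix (Fin n → ZMod 2) (Fin n → ZMod 2) ℂ) :=
    Matrix.linftyOpNormedAlgebra
  set c : ℂ := (Real.cos φ : ℂ)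
  set d : ℂ := Complex.I * (Real.sin φ : ℂ)
  have hexp : ((List.finRange N).map fun j =>
      NormedSpace.exp ((Complex.I * (φ : ℂ)) • σ j))
      = (List.finRange N).map fun j => c • (1 : _) + d • σ j := by
    refine List.map_congr_left fun j _ => ?_
    exact exp_invol' (σ j) (sigma_sq hσ j) φ
  rw [hexp, expand_list σ c d (List.finRange N)]
  have hnodup : (List.finRange N).sublists'.Nodup :=
    List.nodup_sublists'.mpr (List.nodup_finRange N)
  rw [← List.sum_toFinset _ hnodup, Matrix.sum_apply]
  -- kill the terms outside the filter on the RHS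
  rw [Finset.sum_filter_of_ne (fun x _ hne => ?_)]
  -- main bijection
  · refine Finset.sum_nbij' (i := fun t => fun j => if j ∈ t then (1 : ZMod 2) else 0)
      (j := fun x => (List.finRange N).filter fun j => x j = 1) ?_ ?_ ?_ ?_ ?_
    · intro t ht
      exact Finset.mem_univ _
    · intro x hx
      rw [List.mem_toFinset, List.mem_sublists']
      exact List.filter_sublist
    · intro t ht
      dsimp only
      rw [List.mem_toFinset, List.mem_sublists'] at ht
      have : ((List.finRange N).filter fun j =>
          (if j ∈ t then (1 : ZMod 2) else 0) = 1) = (List.finRange N).filter fun j => j ∈ t := by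
        refine List.filter_congr fun j _ => ?_
        by_cases hj : j ∈ t <;> simp [hj]
      rw [this, filter_recover ht (List.nodup_finRange N)]
    · intro x hx
      funext j
      by_cases hj : x j = 1
      · simp [List.mem_filter, hj]
      · have h0 : x j = 0 := (zmod2_cases (x j)).resolve_right hj
        simp [List.mem_filter, hj, h0]
    · intro t ht
      rw [List.mem_toFinset, List.mem_sublists'] at ht
      have htnd : t.Nodup := ht.nodup (List.nodup_finRange N)
      have hfe : ((List.finRange N).filter fun j =>
          (if j ∈ t then (1 : ZMod 2) else 0) = 1) = t := by
        have : ((List.finRange N).filter fun j =>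
            (if j ∈ t then (1 : ZMod 2) else 0) = 1)
            = (List.finRange N).filter fun j => j ∈ t := by
          refine List.filter_congr fun j _ => ?_
          by_cases hj : j ∈ t <;> simp [hj]
        rw [this, filter_recover ht (List.nodup_finRange N)]
      have hcard : (Finset.univ.filter
          (fun j => (if j ∈ t then (1 : ZMod 2) else 0) = 1)).card = t.length := by
        rw [filter_card]
        have : ((List.finRange N).filter fun j =>
            decide ((if j ∈ t then (1 : ZMod 2) else 0) = 1)) = t := hfe
        rw [this]
      rw [Matrix.smul_apply, smul_eq_mul, hfe, hcard, List.length_finRange]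
  -- vanishing off the filter
  · by_contra hP
    apply hne
    have : ((((List.finRange N).filter fun j => x j = 1).map σ).prod) 0 0 = 0 := by
      refine prod_zero' hσ _ 0 0 ?_
      push_neg at hP
      obtain ⟨k, hk⟩ := hP
      intro hfun
      apply hk
      have hsum := congrFun hfun k
      rw [filter_map_sum x (fun j => α j k)] at hsum
      simp only [Pi.zero_apply, zero_add] at hsum
      have h2 : ∑ j, α j k * x j = ∑ j, if x j = 1 then α j k else 0 :=
        Finset.sum_congr rfl fun j _ => by
          rcases zmod2_cases (x j) with h | h <;>
            simp [h, show (0 : ZMod 2) ≠ 1 by decide]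
      rw [h2, ← hsum]
    rw [this, mul_zero]
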